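/- Let h be a Lie algebra automorphism of gl^M_∞ and suppose there is a linear equivalence g : V ≃ V witnessing an isomorphism of twisted modules V^h ≅ V_*, i.e. j(g((h φ)(v))) = −φ*(j(g(v))) for all φ ∈ gl^M_∞ and v ∈ V. Then there exists a linear equivalence f : V ≃ V whose dual map f* maps V_* onto V_*, such that (τ ∘ h)(φ) = f⁻¹ ∘ φ ∘ f for all φ ∈ gl^M_∞. -/

import Mathlib

open TensorProduct

attribute [local instance 100] LieRing.ofAssociativeRing

variable {U W : Type*} [AddCommGroup U] [Module ℂ U] [AddCommGroup W] [Module ℂ W]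

/-- The Mackey Lie algebra `gl^M_{U,W}`: all `φ ∈ End ℂ U` whose dual map preserves
`W̃ = range (B.flip) ⊆ U*`. -/
noncomputable def glMackey (B : U →ₗ[ℂ] W →ₗ[ℂ] ℂ) :
    LieSubalgebra ℂ (Module.End ℂ U) where
  carrier := {φ | ∀ ξ ∈ LinearMap.range B.flip, φ.dualMap ξ ∈ LinearMap.range B.flip}
  add_mem' := by
    intro a b ha hb ξ hξ
    have h : (a + b).dualMap ξ = a.dualMap ξ + b.dualMap ξ := by ext x; simp
    rw [h]
    exact Submodule.add_mem _ (ha ξ hξ) (hb ξ hξ)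
  zero_mem' := by
    intro ξ hξ
    have h : (0 : Module.End ℂ U).dualMap ξ = 0 := by ext x; simp
    rw [h]; exact Submodule.zero_mem _
  smul_mem' := by
    intro c a ha ξ hξ
    have h : (c • a).dualMap ξ = c • a.dualMap ξ := by ext x; simp
    rw [h]
    exact Submodule.smul_mem _ _ (ha ξ hξ)
  lie_mem' := by
    intro a b ha hb ξ hξ
    have h : (⁅a, b⁆ : Module.End ℂ U).dualMap ξ
        = b.dualMap (a.dualMap ξ) - a.dualMap (b.dualMap ξ) := by
      ext x; simp [Module.End.lie_apply]
    rw [h]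
    exact Submodule.sub_mem _ (hb _ (ha ξ hξ)) (ha _ (hb ξ hξ))

/-- `V = ℕ →₀ ℂ`, the countable-dimensional standard space. -/
abbrev Vst : Type := ℕ →₀ ℂ

/-- The standard nondegenerate pairing `B x y = ∑ i, x i * y i` on `V`. -/
noncomputable def Bstd : Vst →ₗ[ℂ] Vst →ₗ[ℂ] ℂ :=
  Finsupp.lsum ℂ fun i => LinearMap.toSpanSingleton ℂ (Vst →ₗ[ℂ] ℂ) (Finsupp.lapply i)

theorem Bstd_apply (x y : Vst) : Bstd x y = x.sum fun i a => a * y i := by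
  simp [Bstd, Finsupp.lapply, Finsupp.sum, smul_eq_mul]

lemma B_single_one (i : ℕ) (y : Vst) : Bstd (Finsupp.single i 1) y = y i := by
  rw [Bstd_apply, Finsupp.sum_single_index] <;> simp

lemma B_comm (x y : Vst) : Bstd x y = Bstd y x := by
  rw [Bstd_apply, Bstd_apply]
  rw [Finsupp.sum_of_support_subset x (Finset.subset_union_left (s₂ := y.support))
    (fun i a => a * y i) (fun i _ => by simp)]
  rw [Finsupp.sum_of_support_subset y (Finset.subset_union_right (s₁ := x.support))
    (fun i a => a * x i) (fun i _ => by simp)]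
  rw [Finset.union_comm]
  exact Finset.sum_congr rfl (fun i _ => mul_comm _ _)

lemma B_ext_right {a b : Vst} (hab : ∀ w, Bstd w a = Bstd w b) : a = b := by
  ext i
  have := hab (Finsupp.single i 1)
  simpa [B_single_one] using this

noncomputable def rk (x y : Vst) : Module.End ℂ Vst := (Bstd.flip y).smulRight x

lemma rk_apply (x y u : Vst) : rk x y u = Bstd u y • x := rfl

lemma rk_mem (x y : Vst) : rk x y ∈ glMackey Bstd := by
  intro ξ hξ
  obtain ⟨z, rfl⟩ := hξ
  refine ⟨Bstd x z • y, ?_⟩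
  ext u
  simp [rk, LinearMap.flip_apply, mul_comm]


/-- If `h` is a Lie algebra automorphism of `gl^M_∞` and `g : V ≃ V` witnesses an
isomorphism of twisted modules `V^h ≅ V_*` (i.e. `j (g ((h φ) v)) = −φ* (j (g v))`,
where `j = Bstd.flip`), then there is `f : V ≃ V` whose dual map carries
`V_* = range j` onto itself, with `(τ ∘ h)(φ) = f⁻¹ ∘ φ ∘ f` for all `φ`; at the level
of `j` the latter reads `(h φ)* (j v) = −j (f⁻¹ (φ (f v)))`. -/
theorem stmt_17 (h : ↥(glMackey Bstd) ≃ₗ⁅ℂ⁆ ↥(glMackey Bstd))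
    (g : Vst ≃ₗ[ℂ] Vst)
    (hg : ∀ (φ : ↥(glMackey Bstd)) (v : Vst),
      Bstd.flip (g ((h φ : Module.End ℂ Vst) v))
        = - LinearMap.dualMap (φ : Module.End ℂ Vst) (Bstd.flip (g v))) :
    ∃ f : Vst ≃ₗ[ℂ] Vst,
      Submodule.map (LinearMap.dualMap (f : Vst →ₗ[ℂ] Vst)) (LinearMap.range Bstd.flip)
          = LinearMap.range Bstd.flip ∧
      ∀ (φ : ↥(glMackey Bstd)) (v : Vst),
        LinearMap.dualMap (h φ : Module.End ℂ Vst) (Bstd.flip v)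
          = - Bstd.flip (f.symm ((φ : Module.End ℂ Vst) (f v))) := by
  classical
  -- pointwise form of hg
  have hgB : ∀ (φ : ↥(glMackey Bstd)) (w v : Vst),
      Bstd w (g ((h φ : Module.End ℂ Vst) v)) = -Bstd ((φ : Module.End ℂ Vst) w) (g v) := by
    intro φ w v
    have := LinearMap.congr_fun (hg φ v) w
    simpa [LinearMap.flip_apply] using this
  set e : Vst := Finsupp.single 0 1 with he
  have hBee : Bstd e e = 1 := by simp [he, B_single_one]
  -- Step A : the B-adjoint of g exists
  have stepA : ∀ x : Vst, ∃ u : Vst, ∀ w, Bstd (g w) x = Bstd w u := by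
    intro x
    set φ0 : ↥(glMackey Bstd) := ⟨rk x (g e), rk_mem _ _⟩ with hφ0
    have hpt : ∀ v, (h φ0 : Module.End ℂ Vst) v = (-Bstd x (g v)) • e := by
      intro v
      apply g.injective
      apply B_ext_right
      intro w
      rw [hgB φ0 w v]
      have hcoe : (φ0 : Module.End ℂ Vst) w = Bstd w (g e) • x := rfl
      rw [hcoe, map_smul, map_smul]
      simp [smul_eq_mul]
      ring
    have hmem := (h φ0).2 (Bstd.flip e) ⟨e, rfl⟩
    obtain ⟨u, hu⟩ := hmem
    refine ⟨-u, fun w => ?_⟩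
    have h1 := LinearMap.congr_fun hu w
    -- h1 : Bstd.flip u w = dualMap (h φ0) (flip e) w
    rw [LinearMap.dualMap_apply, hpt w] at h1
    simp [LinearMap.flip_apply, hBee] at h1
    rw [B_comm, map_neg]
    rw [h1]
    ring
  -- Step B : the B-adjoint of g.symm exists
  have stepB : ∀ x : Vst, ∃ u : Vst, ∀ w, Bstd (g.symm w) x = Bstd w u := by
    intro x
    set ψ : ↥(glMackey Bstd) := ⟨rk e x, rk_mem _ _⟩ with hψdef
    set φ := h.symm ψ with hφdef
    have hψ : h φ = ψ := h.apply_symm_apply ψ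
    have key : ∀ w v : Vst,
        Bstd (g.symm v) x * Bstd w (g e) = -Bstd v ((φ : Module.End ℂ Vst) w) := by
      intro w v
      have := hgB φ w (g.symm v)
      rw [hψ] at this
      have hcoe : (ψ : Module.End ℂ Vst) (g.symm v) = Bstd (g.symm v) x • e := rfl
      rw [hcoe, map_smul, map_smul, g.apply_symm_apply] at this
      rw [smul_eq_mul] at this
      rw [this, B_comm]
    have hge : g e ≠ 0 := by
      intro h0
      have h1 : e = 0 := g.injective (by simpa using h0)
      have := Finsupp.single_eq_zero.1 (he ▸ h1)
      exact one_ne_zero this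
    obtain ⟨i, hi⟩ : ∃ i, (g e) i ≠ 0 := by
      by_contra hc
      push_neg at hc
      exact hge (Finsupp.ext hc)
    refine ⟨(-((g e) i)⁻¹) • (φ : Module.End ℂ Vst) (Finsupp.single i 1), fun w => ?_⟩
    have hk := key (Finsupp.single i 1) w
    rw [B_single_one] at hk
    rw [map_smul, smul_eq_mul]
    have h2 : Bstd (g.symm w) x = ((g e) i)⁻¹ * ((g e) i * Bstd (g.symm w) x) := by
      field_simp
    rw [h2, mul_comm ((g e) i) _, hk]
    ring
  -- choose the adjoints
  choose A hA using stepA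
  choose A' hA' using stepB
  -- A and A' are linear
  have hF : IsLinearMap ℂ A := by
    constructor
    · intro a b
      apply B_ext_right
      intro w
      rw [← hA, map_add, map_add, hA, hA]
    · intro c a
      apply B_ext_right
      intro w
      rw [← hA, map_smul, map_smul, hA]
  have hF' : IsLinearMap ℂ A' := by
    constructor
    · intro a b
      apply B_ext_right
      intro w
      rw [← hA', map_add, map_add, hA', hA']
    · intro c a
      apply B_ext_right
      intro w
      rw [← hA', map_smul, map_smul, hA']
  set F : Vst →ₗ[ℂ] Vst := hF.mk' A with hFdef
  set F' : Vst →ₗ[ℂ] Vst := hF'.mk' A' with hF'def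
  have hFa : ∀ v, F v = A v := fun _ => rfl
  have hF'a : ∀ v, F' v = A' v := fun _ => rfl
  have hAA' : ∀ v, A (A' v) = v := by
    intro v
    apply B_ext_right
    intro w
    rw [← hA, ← hA', g.symm_apply_apply]
  have hA'A : ∀ v, A' (A v) = v := by
    intro v
    apply B_ext_right
    intro w
    rw [← hA', ← hA, g.apply_symm_apply]
  have pf1 : F'.comp F = LinearMap.id := by
    refine LinearMap.ext fun v => ?_
    simp [hF'a, hFa, hA'A]
  have pf2 : F.comp F' = LinearMap.id := by
    refine LinearMap.ext fun v => ?_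
    simp [hF'a, hFa, hAA']
  set f0 : Vst ≃ₗ[ℂ] Vst := LinearEquiv.ofLinear F' F pf1 pf2 with hf0
  have hcoe : (f0 : Vst →ₗ[ℂ] Vst) = F' := rfl
  have happ : ∀ v, f0 v = A' v := fun _ => rfl
  have hsapp : ∀ v, f0.symm v = A v := fun _ => rfl
  refine ⟨f0, ?_, ?_⟩
  · -- the dual map of f carries range j onto itself
    have hdual : ∀ u : Vst, LinearMap.dualMap (F' : Vst →ₗ[ℂ] Vst) (Bstd.flip u)
        = Bstd.flip (g.symm u) := by
      intro u
      refine LinearMap.ext fun w => ?_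
      rw [LinearMap.dualMap_apply, LinearMap.flip_apply, LinearMap.flip_apply, hF'a]
      rw [B_comm, ← hA', B_comm]
    rw [hcoe]
    ext ξ
    simp only [Submodule.mem_map, LinearMap.mem_range]
    constructor
    · rintro ⟨η, ⟨u, rfl⟩, rfl⟩
      exact ⟨g.symm u, (hdual u).symm⟩
    · rintro ⟨u, rfl⟩
      exact ⟨Bstd.flip (g u), ⟨g u, rfl⟩, by rw [hdual, g.symm_apply_apply]⟩
  · -- the intertwining identity
    intro φ v
    refine LinearMap.ext fun w => ?_
    rw [happ, hsapp]
    rw [LinearMap.dualMap_apply, LinearMap.flip_apply, LinearMap.neg_apply,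
      LinearMap.flip_apply]
    calc Bstd ((h φ : Module.End ℂ Vst) w) v
        = Bstd (g.symm (g ((h φ : Module.End ℂ Vst) w))) v := by
          rw [g.symm_apply_apply]
      _ = Bstd (g ((h φ : Module.End ℂ Vst) w)) (A' v) := hA' v _
      _ = Bstd (A' v) (g ((h φ : Module.End ℂ Vst) w)) := B_comm _ _
      _ = -Bstd ((φ : Module.End ℂ Vst) (A' v)) (g w) := hgB φ (A' v) w
      _ = -Bstd (g w) ((φ : Module.End ℂ Vst) (A' v)) := by rw [B_comm]
      _ = -Bstd w (A ((φ : Module.End ℂ Vst) (A' v))) := by rw [hA]
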